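/- arXiv:1204.5117 — 6 statements merged into one kernel-verified Lean document; each statement's English description precedes it below -/
import Mathlib

section
/- Let λ = (λ₁ ≥ λ₂ ≥ … ≥ λ_N ≥ 0) be a partition with at most N parts, let λ⁻ = (λ_N, λ_{N−1}, …, λ₁) be its nondecreasing rearrangement, and for i ≥ 0 let m_λ(i) = #{j : 1 ≤ j ≤ N, λ_j = i}. Then the identity (t^N q; q, t)_λ · h_{q,t}(λ, t) · (t; t)_N = (t^N; q, t)_λ · h_{q,t}(λ⁻, qt) · Π_{i=0}^{λ₁} (t; t)_{m_λ(i)} holds in ℤ[q,t]. (This identity is equivalent, granted the hook formula for M_{λ⁻}(0), to the statement that M_{λ⁻}(0) = (−1)^{|λ|} · ((t^N;q,t)_λ / h_{q,t}(λ,t)) · φ(S_λ)/φ(S_N), where φ(S_λ) and φ(S_N) are the Poincaré polynomials of the stabilizer of λ and of the symmetric group S_N.) -/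
open Finset MvPolynomial

/-- `ℤ[q,t]`, with `q = X 0` and `t = X 1`. -/
abbrev Zqt : Type := MvPolynomial (Fin 2) ℤ

noncomputable def qz : Zqt := X 0
noncomputable def tz : Zqt := X 1

/-- The leg of the cell `(i,j)` (with `1 ≤ j ≤ v[i]`) in the diagram of `v`:
`l_v(i,j) = #{k < i : j ≤ v[k]+1 ≤ v[i]} + #{k > i : j ≤ v[k] ≤ v[i]}`. -/
def legf {N : ℕ} (v : Fin N → ℕ) (i : Fin N) (j : ℕ) : ℕ :=
  (univ.filter fun k : Fin N => k < i ∧ j ≤ v k + 1 ∧ v k + 1 ≤ v i).card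
    + (univ.filter fun k : Fin N => i < k ∧ j ≤ v k ∧ v k ≤ v i).card

/-- The `(q,t)`-hook product of `v` with argument `z`. -/
noncomputable def hookZ {N : ℕ} (v : Fin N → ℕ) (z : Zqt) : Zqt :=
  ∏ i : Fin N, ∏ j ∈ Icc 1 (v i), (1 - z * qz ^ (v i - j) * tz ^ legf v i j)

/-- `(t;t)_n = Π_{i=1}^{n} (1 − t^i)`. -/
noncomputable def ttPoch (n : ℕ) : Zqt := ∏ i ∈ Icc 1 n, (1 - tz ^ i)

/-- `(t^N q^ε; q, t)_λ = Π_{i=1}^{N} Π_{l=0}^{λ_i−1} (1 − q^{ε+l} t^{N+1−i})`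
(generalized Pochhammer symbol with `a = t^N q^ε`). -/
noncomputable def gpochTN {N : ℕ} (ε : ℕ) (lam : Fin N → ℕ) : Zqt :=
  ∏ i : Fin N, ∏ l ∈ range (lam i), (1 - qz ^ (ε + l) * tz ^ (N - (i : ℕ)))

namespace HPRI

variable {M : Type*} [CommMonoid M]

lemma prodIccOne (n : ℕ) (g : ℕ → M) : ∏ m ∈ Icc 1 n, g m = ∏ x ∈ range n, g (x + 1) := by
  refine Finset.prod_nbij' (fun m => m - 1) (fun x => x + 1) ?_ ?_ ?_ ?_ ?_
  · intro a ha; simp only [mem_Icc] at ha; simp only [mem_range]; omega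
  · intro a ha; simp only [mem_range] at ha; simp only [mem_Icc]; omega
  · intro a ha; simp only [mem_Icc] at ha; omega
  · intro a _; omega
  · intro a ha; simp only [mem_Icc] at ha; congr 1; omega

lemma prodIccReflect (n : ℕ) (g : ℕ → M) : ∏ j ∈ Icc 1 n, g j = ∏ x ∈ range n, g (n - x) := by
  refine Finset.prod_nbij' (fun j => n - j) (fun x => n - x) ?_ ?_ ?_ ?_ ?_
  · intro a ha; simp only [mem_Icc] at ha; simp only [mem_range]; omega
  · intro a ha; simp only [mem_range] at ha; simp only [mem_Icc]; omega
  · intro a ha; simp only [mem_Icc] at ha; omega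
  · intro a ha; simp only [mem_range] at ha; omega
  · intro a ha; simp only [mem_Icc] at ha; congr 1; omega

lemma prodIcoOffset (c d : ℕ) (g : ℕ → M) :
    ∏ x ∈ range (d - c), g (c + x) = ∏ r ∈ Ico c d, g r := by
  refine Finset.prod_nbij' (fun x => c + x) (fun r => r - c) ?_ ?_ ?_ ?_ ?_
  · intro a ha; simp only [mem_range] at ha; simp only [mem_Ico]; omega
  · intro a ha; simp only [mem_Ico] at ha; simp only [mem_range]; omega
  · intro a _; omega
  · intro a ha; simp only [mem_Ico] at ha; omega
  · intro a _; rfl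

lemma prodIcoReflect (c n : ℕ) (hc : c ≤ n) (g : ℕ → M) :
    ∏ i ∈ Ico (n - c) n, g i = ∏ r ∈ range c, g (n - 1 - r) := by
  refine Finset.prod_nbij' (fun i => n - 1 - i) (fun r => n - 1 - r) ?_ ?_ ?_ ?_ ?_
  · intro a ha; simp only [mem_Ico] at ha; simp only [mem_range]; omega
  · intro a ha; simp only [mem_range] at ha; simp only [mem_Ico]; omega
  · intro a ha; simp only [mem_Ico] at ha; omega
  · intro a ha; simp only [mem_range] at ha; omega
  · intro a ha; simp only [mem_Ico] at ha; congr 1; omega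

lemma swapG (N A : ℕ) (f : ℕ → ℕ) (hf : ∀ i, i < N → f i ≤ A) (F : ℕ → ℕ → M) :
    ∏ i ∈ range N, ∏ l ∈ range (f i), F i l
      = ∏ l ∈ range A, ∏ i ∈ (range N).filter (fun i => l < f i), F i l := by
  have h1 : ∀ i ∈ range N, ∏ l ∈ range (f i), F i l
      = ∏ l ∈ range A, if l < f i then F i l else 1 := by
    intro i hi
    rw [← Finset.prod_filter]
    apply Finset.prod_congr _ (fun _ _ => rfl)
    ext l
    simp only [mem_filter, mem_range]
    constructor
    · intro h; exact ⟨lt_of_lt_of_le h (hf i (mem_range.mp hi)), h⟩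
    · intro h; exact h.2
  rw [Finset.prod_congr rfl h1, Finset.prod_comm]
  exact Finset.prod_congr rfl (fun l _ => (Finset.prod_filter _ _).symm)

lemma blockProd (g : ℕ → M) (d : ℕ → ℕ) (hd : ∀ k, d (k + 1) ≤ d k) (Mn : ℕ) :
    ∏ v ∈ range (Mn + 1), ∏ r ∈ Ico (d (v + 1)) (d v), g r
      = ∏ r ∈ Ico (d (Mn + 1)) (d 0), g r := by
  have hd0 : ∀ k, d k ≤ d 0 := by
    intro k
    induction k with
    | zero => exact le_rfl
    | succ n ih => exact (hd n).trans ih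
  induction Mn with
  | zero => simp
  | succ n ih =>
    rw [Finset.prod_range_succ, ih, mul_comm,
      Finset.prod_Ico_consecutive g (hd (n + 1)) (hd0 (n + 1))]

section Partition

variable (N : ℕ) (lam : Fin N → ℕ)

/-- `cc a = #{i : a ≤ λ_i}`, the number of parts of size at least `a`. -/
def cc (a : ℕ) : ℕ := (univ.filter fun i : Fin N => a ≤ lam i).card

/-- `λ` as a function on `ℕ` (zero outside `[0,N)`). -/
def lm (r : ℕ) : ℕ := if h : r < N then lam ⟨r, h⟩ else 0

lemma cc_le (a : ℕ) : cc N lam a ≤ N := by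
  have := Finset.card_filter_le (univ : Finset (Fin N)) (fun i => a ≤ lam i)
  simpa [cc] using this

lemma cc_zero : cc N lam 0 = N := by simp [cc]

lemma cc_anti {a b : ℕ} (h : a ≤ b) : cc N lam b ≤ cc N lam a := by
  apply Finset.card_le_card
  intro x hx
  simp only [mem_filter, mem_univ, true_and] at hx ⊢
  omega

lemma memF (hanti : Antitone lam) (a : ℕ) (i : Fin N) :
    a ≤ lam i ↔ (i : ℕ) < cc N lam a := by
  constructor
  · intro h
    have hsub : (Iic i) ⊆ univ.filter fun k : Fin N => a ≤ lam k := by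
      intro k hk
      simp only [mem_Iic] at hk
      simp only [mem_filter, mem_univ, true_and]
      exact le_trans h (hanti hk)
    have := Finset.card_le_card hsub
    rw [Fin.card_Iic] at this
    exact lt_of_lt_of_le (Nat.lt_succ_self _) this
  · intro h
    by_contra hc
    push_neg at hc
    have hsub : (univ.filter fun k : Fin N => a ≤ lam k) ⊆ Iio i := by
      intro k hk
      simp only [mem_filter, mem_univ, true_and] at hk
      simp only [mem_Iio]
      by_contra hge
      push_neg at hge
      have := hanti hge
      omega
    have hle : cc N lam a ≤ (i : ℕ) := by
      rw [cc, ← Fin.card_Iio i]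
      exact Finset.card_le_card hsub
    omega

lemma memL (hanti : Antitone lam) {a r : ℕ} (hr : r < N) :
    a ≤ lm N lam r ↔ r < cc N lam a := by
  have : lm N lam r = lam ⟨r, hr⟩ := dif_pos hr
  rw [this]
  exact memF N lam hanti a ⟨r, hr⟩

lemma lm_eq (hanti : Antitone lam) {v r : ℕ} (h1 : cc N lam (v + 1) ≤ r)
    (h2 : r < cc N lam v) : lm N lam r = v := by
  have hr : r < N := lt_of_lt_of_le h2 (cc_le N lam v)
  have ha := (memL N lam hanti hr).mpr h2
  have hb : ¬ (v + 1 ≤ lm N lam r) := by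
    intro h
    have := (memL N lam hanti hr).mp h
    omega
  omega

lemma lm_le (hanti : Antitone lam) (hN : 0 < N) (r : ℕ) (hr : r < N) :
    lm N lam r ≤ lm N lam 0 := by
  rw [show lm N lam r = lam ⟨r, hr⟩ from dif_pos hr,
    show lm N lam 0 = lam ⟨0, hN⟩ from dif_pos hN]
  exact hanti (by simp [Fin.le_def])

lemma cc_top (hanti : Antitone lam) (hN : 0 < N) : cc N lam (lm N lam 0 + 1) = 0 := by
  rw [cc, Finset.card_eq_zero]
  ext i
  simp only [mem_filter, mem_univ, true_and, notMem_empty, iff_false]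
  intro h
  have h2 : lm N lam (i : ℕ) = lam i := by
    rw [show lm N lam (i : ℕ) = lam ⟨(i : ℕ), i.isLt⟩ from dif_pos i.isLt]
  have := lm_le N lam hanti hN (i : ℕ) i.isLt
  omega

lemma cardFinIco (hN : 0 < N) (x y : ℕ) (hy : y ≤ N) :
    (univ.filter fun k : Fin N => x ≤ (k : ℕ) ∧ (k : ℕ) < y).card = y - x := by
  rw [← Nat.card_Ico x y]
  refine Finset.card_nbij' (fun k => (k : ℕ)) (fun m => (⟨m % N, Nat.mod_lt m hN⟩ : Fin N))
    ?_ ?_ ?_ ?_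
  · intro a ha; dsimp only; simp only [mem_filter, mem_univ, true_and, mem_coe] at ha
    simp only [mem_Ico, mem_coe]; exact ha
  · intro m hm; simp only [mem_Ico, mem_coe] at hm
    have hmN : m < N := by omega
    simp only [mem_filter, mem_univ, true_and, mem_coe, Nat.mod_eq_of_lt hmN]
    exact hm
  · intro a ha
    apply Fin.ext
    simp [Nat.mod_eq_of_lt a.isLt]
  · intro m hm; simp only [mem_Ico, mem_coe] at hm
    simp [Nat.mod_eq_of_lt (show m < N by omega)]

lemma revCard (P : ℕ → Prop) [DecidablePred P] :
    (univ.filter fun k : Fin N => P (lam k.rev)).card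
      = (univ.filter fun k : Fin N => P (lam k)).card := by
  refine Finset.card_nbij' (fun k => k.rev) (fun k => k.rev) ?_ ?_ ?_ ?_
  · intro a ha; dsimp only; simp only [mem_filter, mem_univ, true_and, mem_coe] at ha ⊢; exact ha
  · intro a ha; dsimp only; simp only [mem_filter, mem_univ, true_and, mem_coe] at ha ⊢
    rwa [Fin.rev_rev]
  · intro a _; exact Fin.rev_rev a
  · intro a _; exact Fin.rev_rev a

lemma mult_card (hanti : Antitone lam) (v : ℕ) :
    (univ.filter fun j : Fin N => lam j = v).card = cc N lam v - cc N lam (v + 1) := by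
  have h : (univ.filter fun j : Fin N => lam j = v)
      = univ.filter fun j : Fin N => cc N lam (v + 1) ≤ (j : ℕ) ∧ (j : ℕ) < cc N lam v := by
    ext j
    simp only [mem_filter, mem_univ, true_and]
    have h1 := memF N lam hanti v j
    have h2 := memF N lam hanti (v + 1) j
    omega
  rcases Nat.eq_zero_or_pos N with hN | hN
  · subst hN
    simp [cc]
  · rw [h, cardFinIco N hN _ _ (cc_le N lam v)]

lemma leg_lam (hanti : Antitone lam) (i : Fin N) (j : ℕ) (hj : j ≤ lam i) :
    legf lam i j = cc N lam j - ((i : ℕ) + 1) := by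
  rw [legf]
  have h1 : (univ.filter fun k : Fin N => k < i ∧ j ≤ lam k + 1 ∧ lam k + 1 ≤ lam i) = ∅ := by
    ext k
    simp only [mem_filter, mem_univ, true_and, notMem_empty, iff_false]
    rintro ⟨hk, -, h2⟩
    have := hanti hk.le
    omega
  have h2 : (univ.filter fun k : Fin N => i < k ∧ j ≤ lam k ∧ lam k ≤ lam i)
      = univ.filter fun k : Fin N => (i : ℕ) + 1 ≤ (k : ℕ) ∧ (k : ℕ) < cc N lam j := by
    ext k
    simp only [mem_filter, mem_univ, true_and]
    constructor
    · rintro ⟨hik, hjk, -⟩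
      exact ⟨Fin.lt_def.mp hik, (memF N lam hanti j k).mp hjk⟩
    · rintro ⟨hik, hkc⟩
      have hik' : i < k := Fin.lt_def.mpr (by omega)
      exact ⟨hik', (memF N lam hanti j k).mpr hkc, hanti hik'.le⟩
  rw [h1, h2, Finset.card_empty, cardFinIco N i.pos _ _ (cc_le N lam j)]
  omega

lemma leg_rev (hanti : Antitone lam) (i : Fin N) (j : ℕ) (hj1 : 1 ≤ j)
    (hj2 : j ≤ lam i.rev) :
    legf (fun k : Fin N => lam k.rev) i j
      = (cc N lam (j - 1) - cc N lam (lam i.rev))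
        + (N - cc N lam (lam i.rev + 1) - ((i : ℕ) + 1)) := by
  have hrevmono : ∀ k l : Fin N, k ≤ l → lam k.rev ≤ lam l.rev := by
    intro k l h
    exact hanti (by rw [Fin.rev_le_rev]; exact h)
  rw [legf]
  have h1 : (univ.filter fun k : Fin N =>
        k < i ∧ j ≤ lam k.rev + 1 ∧ lam k.rev + 1 ≤ lam i.rev)
      = univ.filter fun k : Fin N => j - 1 ≤ lam k.rev ∧ lam k.rev + 1 ≤ lam i.rev := by
    ext k
    simp only [mem_filter, mem_univ, true_and]
    constructor
    · rintro ⟨-, ha, hb⟩; exact ⟨by omega, hb⟩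
    · rintro ⟨ha, hb⟩
      refine ⟨?_, by omega, hb⟩
      by_contra hge
      push_neg at hge
      have := hrevmono i k hge
      omega
  have h1card : (univ.filter fun k : Fin N =>
        j - 1 ≤ lam k.rev ∧ lam k.rev + 1 ≤ lam i.rev).card
      = cc N lam (j - 1) - cc N lam (lam i.rev) := by
    rw [revCard N lam (fun x => j - 1 ≤ x ∧ x + 1 ≤ lam i.rev)]
    have h : (univ.filter fun k : Fin N => j - 1 ≤ lam k ∧ lam k + 1 ≤ lam i.rev)
        = univ.filter fun k : Fin N =>
            cc N lam (lam i.rev) ≤ (k : ℕ) ∧ (k : ℕ) < cc N lam (j - 1) := by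
      ext k
      simp only [mem_filter, mem_univ, true_and]
      have e1 := memF N lam hanti (j - 1) k
      have e2 := memF N lam hanti (lam i.rev) k
      omega
    rw [h, cardFinIco N i.pos _ _ (cc_le N lam (j - 1))]
  have hrevval : ((i.rev : ℕ)) = N - 1 - (i : ℕ) := by
    rw [Fin.val_rev]; omega
  have hccrev : cc N lam (lam i.rev + 1) ≤ N - 1 - (i : ℕ) := by
    have h := memF N lam hanti (lam i.rev + 1) i.rev
    rw [hrevval] at h
    omega
  have h2 : (univ.filter fun k : Fin N => i < k ∧ j ≤ lam k.rev ∧ lam k.rev ≤ lam i.rev)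
      = univ.filter fun k : Fin N =>
          (i : ℕ) + 1 ≤ (k : ℕ) ∧ (k : ℕ) < N - cc N lam (lam i.rev + 1) := by
    ext k
    simp only [mem_filter, mem_univ, true_and]
    have e1 := memF N lam hanti (lam i.rev + 1) k.rev
    have hkrev : ((k.rev : ℕ)) = N - 1 - (k : ℕ) := by rw [Fin.val_rev]; omega
    rw [hkrev] at e1
    have hkN : (k : ℕ) < N := k.isLt
    constructor
    · rintro ⟨hik, -, hb⟩
      have hcc := cc_le N lam (lam i.rev + 1)
      refine ⟨Fin.lt_def.mp hik, ?_⟩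
      omega
    · rintro ⟨ha, hb⟩
      have hik : i < k := Fin.lt_def.mpr (by omega)
      have hge : lam i.rev ≤ lam k.rev := hrevmono i k hik.le
      have hcc := cc_le N lam (lam i.rev + 1)
      exact ⟨hik, by omega, by omega⟩
  rw [h1, h1card, h2, cardFinIco N i.pos _ _ (by omega)]

end Partition
end HPRI
namespace HPRI
section Partition2

variable (N : ℕ) (lam : Fin N → ℕ)

noncomputable def Fq (a m : ℕ) : Zqt := 1 - qz ^ a * tz ^ m

def Bex (a r : ℕ) : ℕ :=
  1 + (cc N lam (lm N lam r - a) - cc N lam (lm N lam r)) + (r - cc N lam (lm N lam r + 1))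

noncomputable def LA (a : ℕ) : Zqt := ∏ i ∈ range (cc N lam a), Fq a (N - i)

noncomputable def LB (a : ℕ) : Zqt :=
  ∏ r ∈ range (cc N lam (a + 1)), Fq a (cc N lam (lm N lam r - a) - r)

noncomputable def RA (a : ℕ) : Zqt := ∏ i ∈ range (cc N lam (a + 1)), Fq a (N - i)

noncomputable def RB (a : ℕ) : Zqt := ∏ r ∈ range (cc N lam a), Fq a (Bex N lam a r)

lemma filter_lm (hanti : Antitone lam) (l : ℕ) :
    (range N).filter (fun i => l < lm N lam i) = range (cc N lam (l + 1)) := by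
  ext i
  simp only [mem_filter, mem_range]
  constructor
  · rintro ⟨h1, h2⟩
    have := memL N lam hanti (a := l + 1) h1
    omega
  · intro h
    have h2 := lt_of_lt_of_le h (cc_le N lam (l + 1))
    have := memL N lam hanti (a := l + 1) h2
    omega

lemma filter_vm (hanti : Antitone lam) (l : ℕ) :
    (range N).filter (fun i => l < lm N lam (N - 1 - i)) = Ico (N - cc N lam (l + 1)) N := by
  ext i
  simp only [mem_filter, mem_range, mem_Ico]
  have hcl := cc_le N lam (l + 1)
  constructor
  · rintro ⟨h1, h2⟩
    have h3 : N - 1 - i < N := by omega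
    have := memL N lam hanti (a := l + 1) (r := N - 1 - i) h3
    omega
  · rintro ⟨h1, h2⟩
    have h3 : N - 1 - i < N := by omega
    have := memL N lam hanti (a := l + 1) (r := N - 1 - i) h3
    exact ⟨h2, by omega⟩

lemma gpochEq (hanti : Antitone lam) (hN : 0 < N) (ε : ℕ) :
    gpochTN ε lam
      = ∏ l ∈ range (lm N lam 0), ∏ i ∈ range (cc N lam (l + 1)), Fq (ε + l) (N - i) := by
  rw [gpochTN]
  have h0 : ∀ i : Fin N, ∏ l ∈ range (lam i), (1 - qz ^ (ε + l) * tz ^ (N - (i : ℕ)))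
      = (fun i0 => ∏ l ∈ range (lm N lam i0), Fq (ε + l) (N - i0)) ((i : ℕ)) := by
    intro i
    dsimp only
    rw [show lm N lam (i : ℕ) = lam i from dif_pos i.isLt]
    rfl
  rw [Finset.prod_congr rfl (fun i _ => h0 i),
    Fin.prod_univ_eq_prod_range (fun i0 => ∏ l ∈ range (lm N lam i0), Fq (ε + l) (N - i0)) N,
    swapG N (lm N lam 0) (lm N lam) (fun i hi => lm_le N lam hanti hN i hi)
      (fun i l => Fq (ε + l) (N - i))]
  exact Finset.prod_congr rfl (fun l _ => by rw [filter_lm N lam hanti l])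

lemma hookL (hanti : Antitone lam) (hN : 0 < N) :
    hookZ lam tz = ∏ a ∈ range (lm N lam 0), LB N lam a := by
  rw [hookZ]
  have step1 : ∀ i : Fin N,
      ∏ j ∈ Icc 1 (lam i), (1 - tz * qz ^ (lam i - j) * tz ^ legf lam i j)
        = ∏ x ∈ range (lam i), Fq x (cc N lam (lam i - x) - (i : ℕ)) := by
    intro i
    rw [prodIccReflect (lam i) (fun j => 1 - tz * qz ^ (lam i - j) * tz ^ legf lam i j)]
    refine Finset.prod_congr rfl (fun x hx => ?_)
    rw [mem_range] at hx
    rw [leg_lam N lam hanti i (lam i - x) (by omega)]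
    have hic : (i : ℕ) < cc N lam (lam i - x) :=
      (memF N lam hanti (lam i - x) i).mp (by omega)
    rw [show lam i - (lam i - x) = x from by omega, Fq,
      show cc N lam (lam i - x) - (i : ℕ) = (cc N lam (lam i - x) - ((i : ℕ) + 1)) + 1 from by omega,
      pow_succ]
    ring
  have h0 : ∀ i : Fin N,
      (∏ x ∈ range (lam i), Fq x (cc N lam (lam i - x) - (i : ℕ)))
        = (fun i0 => ∏ x ∈ range (lm N lam i0), Fq x (cc N lam (lm N lam i0 - x) - i0)) ((i : ℕ)) := by
    intro i
    dsimp only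
    rw [show lm N lam (i : ℕ) = lam i from dif_pos i.isLt]
  rw [Finset.prod_congr rfl (fun i _ => step1 i), Finset.prod_congr rfl (fun i _ => h0 i),
    Fin.prod_univ_eq_prod_range
      (fun i0 => ∏ x ∈ range (lm N lam i0), Fq x (cc N lam (lm N lam i0 - x) - i0)) N,
    swapG N (lm N lam 0) (lm N lam) (fun i hi => lm_le N lam hanti hN i hi)
      (fun i x => Fq x (cc N lam (lm N lam i - x) - i))]
  refine Finset.prod_congr rfl (fun a _ => ?_)
  rw [filter_lm N lam hanti a, LB]

lemma hookR (hanti : Antitone lam) (hN : 0 < N) :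
    hookZ (fun i : Fin N => lam i.rev) (qz * tz)
      = ∏ a ∈ range (lm N lam 0), RB N lam (a + 1) := by
  rw [hookZ]
  have step1 : ∀ i : Fin N,
      ∏ j ∈ Icc 1 (lam i.rev),
          (1 - qz * tz * qz ^ (lam i.rev - j) * tz ^ legf (fun k : Fin N => lam k.rev) i j)
        = ∏ x ∈ range (lam i.rev),
            Fq (x + 1) ((cc N lam (lam i.rev - (x + 1)) - cc N lam (lam i.rev))
              + (N - cc N lam (lam i.rev + 1) - (i : ℕ))) := by
    intro i
    rw [prodIccReflect (lam i.rev)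
      (fun j => 1 - qz * tz * qz ^ (lam i.rev - j) * tz ^ legf (fun k : Fin N => lam k.rev) i j)]
    refine Finset.prod_congr rfl (fun x hx => ?_)
    rw [mem_range] at hx
    rw [leg_rev N lam hanti i (lam i.rev - x) (by omega) (by omega)]
    have hrevval : ((i.rev : ℕ)) = N - 1 - (i : ℕ) := by rw [Fin.val_rev]; omega
    have hccrev : cc N lam (lam i.rev + 1) ≤ N - 1 - (i : ℕ) := by
      have h := memF N lam hanti (lam i.rev + 1) i.rev
      rw [hrevval] at h
      omega
    have hiN : (i : ℕ) < N := i.isLt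
    rw [show lam i.rev - (lam i.rev - x) = x from by omega,
      show lam i.rev - x - 1 = lam i.rev - (x + 1) from by omega, Fq,
      show (cc N lam (lam i.rev - (x + 1)) - cc N lam (lam i.rev))
            + (N - cc N lam (lam i.rev + 1) - (i : ℕ))
          = ((cc N lam (lam i.rev - (x + 1)) - cc N lam (lam i.rev))
            + (N - cc N lam (lam i.rev + 1) - ((i : ℕ) + 1))) + 1 from by omega,
      pow_succ, pow_succ]
    ring
  have h0 : ∀ i : Fin N,
      (∏ x ∈ range (lam i.rev),
          Fq (x + 1) ((cc N lam (lam i.rev - (x + 1)) - cc N lam (lam i.rev))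
            + (N - cc N lam (lam i.rev + 1) - (i : ℕ))))
        = (fun i0 => ∏ x ∈ range (lm N lam (N - 1 - i0)),
            Fq (x + 1) ((cc N lam (lm N lam (N - 1 - i0) - (x + 1)) - cc N lam (lm N lam (N - 1 - i0)))
              + (N - cc N lam (lm N lam (N - 1 - i0) + 1) - i0))) ((i : ℕ)) := by
    intro i
    dsimp only
    have hiN : (i : ℕ) < N := i.isLt
    have hlt : N - 1 - (i : ℕ) < N := by omega
    have hlm : lm N lam (N - 1 - (i : ℕ)) = lam i.rev := by
      have h1 : lm N lam (N - 1 - (i : ℕ)) = lam ⟨N - 1 - (i : ℕ), hlt⟩ := dif_pos hlt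
      rw [h1]
      congr 1
      apply Fin.ext
      rw [Fin.val_rev]
      show N - 1 - (i : ℕ) = N - ((i : ℕ) + 1)
      omega
    rw [hlm]
  rw [Finset.prod_congr rfl (fun i _ => step1 i), Finset.prod_congr rfl (fun i _ => h0 i),
    Fin.prod_univ_eq_prod_range
      (fun i0 => ∏ x ∈ range (lm N lam (N - 1 - i0)),
        Fq (x + 1) ((cc N lam (lm N lam (N - 1 - i0) - (x + 1)) - cc N lam (lm N lam (N - 1 - i0)))
          + (N - cc N lam (lm N lam (N - 1 - i0) + 1) - i0))) N,
    swapG N (lm N lam 0) (fun i => lm N lam (N - 1 - i))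
      (fun i hi => lm_le N lam hanti hN (N - 1 - i) (by omega))
      (fun i x => Fq (x + 1) ((cc N lam (lm N lam (N - 1 - i) - (x + 1)) - cc N lam (lm N lam (N - 1 - i)))
        + (N - cc N lam (lm N lam (N - 1 - i) + 1) - i)))]
  refine Finset.prod_congr rfl (fun a _ => ?_)
  rw [filter_vm N lam hanti a,
    prodIcoReflect (cc N lam (a + 1)) N (cc_le N lam (a + 1))]
  rw [RB]
  refine Finset.prod_congr rfl (fun r hr => ?_)
  rw [mem_range] at hr
  have hrN : r < N := lt_of_lt_of_le hr (cc_le N lam (a + 1))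
  have hb : N - 1 - (N - 1 - r) = r := by omega
  rw [hb]
  have hw : cc N lam (lm N lam r + 1) ≤ r := by
    have := memL N lam hanti (a := lm N lam r + 1) hrN
    omega
  rw [Bex]
  congr 1
  omega

lemma ttN : ttPoch N = LA N lam 0 := by
  rw [ttPoch, LA, cc_zero, prodIccReflect N (fun m => 1 - tz ^ m)]
  refine Finset.prod_congr rfl (fun x _ => ?_)
  rw [Fq, pow_zero, one_mul]

lemma b3 (hanti : Antitone lam) (hN : 0 < N) :
    ∏ val ∈ range (lm N lam 0 + 1),
        ttPoch ((univ.filter fun j : Fin N => lam j = val).card) = RB N lam 0 := by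
  have step : ∀ val, ttPoch ((univ.filter fun j : Fin N => lam j = val).card)
      = ∏ r ∈ Ico (cc N lam (val + 1)) (cc N lam val), Fq 0 (Bex N lam 0 r) := by
    intro val
    rw [mult_card N lam hanti val, ttPoch, prodIccOne,
      ← prodIcoOffset (cc N lam (val + 1)) (cc N lam val) (fun r => Fq 0 (Bex N lam 0 r))]
    refine Finset.prod_congr rfl (fun x hx => ?_)
    rw [mem_range] at hx
    have hlm : lm N lam (cc N lam (val + 1) + x) = val :=
      lm_eq N lam hanti (by omega) (by omega)
    have hexp : 1 + (cc N lam (val - 0) - cc N lam val)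
        + (cc N lam (val + 1) + x - cc N lam (val + 1)) = x + 1 := by
      simp only [Nat.sub_zero]
      omega
    simp only [Bex, hlm, Fq, hexp, pow_zero, one_mul]
  rw [Finset.prod_congr rfl (fun val _ => step val),
    blockProd (fun r => Fq 0 (Bex N lam 0 r)) (cc N lam)
      (fun k => cc_anti N lam (Nat.le_succ k)) (lm N lam 0),
    cc_top N lam hanti hN, cc_zero, RB, cc_zero, Finset.range_eq_Ico]

lemma keyLem (hanti : Antitone lam) (a : ℕ) :
    LA N lam a * LB N lam a = RA N lam a * RB N lam a := by
  have hba : cc N lam (a + 1) ≤ cc N lam a := cc_anti N lam (Nat.le_succ a)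
  have haN : cc N lam a ≤ N := cc_le N lam a
  have hsplitLA : LA N lam a
      = RA N lam a * ∏ i ∈ Ico (cc N lam (a + 1)) (cc N lam a), Fq a (N - i) := by
    rw [LA, RA, Finset.range_eq_Ico,
      ← Finset.prod_Ico_consecutive (fun i => Fq a (N - i)) (Nat.zero_le _) hba, Finset.range_eq_Ico]
  have hsplitRB : RB N lam a
      = (∏ r ∈ range (cc N lam (a + 1)), Fq a (Bex N lam a r))
        * ∏ r ∈ Ico (cc N lam (a + 1)) (cc N lam a), Fq a (Bex N lam a r) := by
    rw [RB, Finset.range_eq_Ico,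
      ← Finset.prod_Ico_consecutive (fun r => Fq a (Bex N lam a r)) (Nat.zero_le _) hba, Finset.range_eq_Ico]
  have claim1 : ∏ r ∈ Ico (cc N lam (a + 1)) (cc N lam a), Fq a (Bex N lam a r)
      = ∏ i ∈ Ico (cc N lam (a + 1)) (cc N lam a), Fq a (N - i) := by
    refine Finset.prod_nbij' (fun r => cc N lam (a + 1) + cc N lam a - 1 - r)
      (fun i => cc N lam (a + 1) + cc N lam a - 1 - i) ?_ ?_ ?_ ?_ ?_
    · intro r hr; simp only [mem_Ico] at hr ⊢; omega
    · intro r hr; simp only [mem_Ico] at hr ⊢; omega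
    · intro r hr; simp only [mem_Ico] at hr; omega
    · intro r hr; simp only [mem_Ico] at hr; omega
    · intro r hr
      simp only [mem_Ico] at hr
      have hlm : lm N lam r = a := lm_eq N lam hanti hr.1 hr.2
      rw [Bex, hlm, Nat.sub_self, cc_zero]
      congr 1
      omega
  have master : ∀ r, r < cc N lam (a + 1) →
      lm N lam (cc N lam (lm N lam r + 1) + cc N lam (lm N lam r) - 1 - r) = lm N lam r ∧
      cc N lam (lm N lam r + 1) + cc N lam (lm N lam r) - 1 - r < cc N lam (a + 1) ∧
      r < cc N lam (lm N lam r) ∧ cc N lam (lm N lam r + 1) ≤ r := by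
    intro r hr
    have hrN : r < N := lt_of_lt_of_le hr (cc_le N lam (a + 1))
    have hva : a + 1 ≤ lm N lam r := by
      have := memL N lam hanti (a := a + 1) hrN; omega
    have h0 : r < cc N lam (lm N lam r) := by
      have := memL N lam hanti (a := lm N lam r) hrN; omega
    have h1 : cc N lam (lm N lam r + 1) ≤ r := by
      have := memL N lam hanti (a := lm N lam r + 1) hrN; omega
    have hρ : lm N lam (cc N lam (lm N lam r + 1) + cc N lam (lm N lam r) - 1 - r)
        = lm N lam r := lm_eq N lam hanti (by omega) (by omega)
    have hcb : cc N lam (lm N lam r) ≤ cc N lam (a + 1) := cc_anti N lam hva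
    exact ⟨hρ, by omega, h0, h1⟩
  have claim2 : LB N lam a = ∏ r ∈ range (cc N lam (a + 1)), Fq a (Bex N lam a r) := by
    rw [LB]
    refine Finset.prod_nbij'
      (fun r => cc N lam (lm N lam r + 1) + cc N lam (lm N lam r) - 1 - r)
      (fun r => cc N lam (lm N lam r + 1) + cc N lam (lm N lam r) - 1 - r) ?_ ?_ ?_ ?_ ?_
    · intro r hr; rw [mem_range] at hr ⊢
      exact (master r hr).2.1
    · intro r hr; rw [mem_range] at hr ⊢
      exact (master r hr).2.1
    · intro r hr; rw [mem_range] at hr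
      obtain ⟨h2, h3, h4, h5⟩ := master r hr
      rw [h2]
      omega
    · intro r hr; rw [mem_range] at hr
      obtain ⟨h2, h3, h4, h5⟩ := master r hr
      rw [h2]
      omega
    · intro r hr; rw [mem_range] at hr
      obtain ⟨h2, h3, h4, h5⟩ := master r hr
      rw [Bex, h2]
      have h6 : cc N lam (lm N lam r) ≤ cc N lam (lm N lam r - a) :=
        cc_anti N lam (Nat.sub_le _ _)
      congr 1
      omega
  rw [hsplitLA, claim2, hsplitRB, ← claim1]
  ring

end Partition2
end HPRI

/-- For a partition `λ` with at most `N` parts, nondecreasing rearrangement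
`λ⁻` and multiplicities `m_λ(i)`, the identity
`(t^N q; q,t)_λ · h_{q,t}(λ,t) · (t;t)_N
   = (t^N; q,t)_λ · h_{q,t}(λ⁻,qt) · Π_{i=0}^{λ₁} (t;t)_{m_λ(i)}`
holds in `ℤ[q,t]`. -/
theorem hook_pochhammer_reversal_identity
    (N : ℕ) (hN : 1 ≤ N) (lam : Fin N → ℕ) (hanti : Antitone lam) :
    gpochTN 1 lam * hookZ lam tz * ttPoch N =
      gpochTN 0 lam * hookZ (fun i : Fin N => lam i.rev) (qz * tz) *
        ∏ i ∈ range (lam ⟨0, by omega⟩ + 1),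
          ttPoch ((univ.filter fun j : Fin N => lam j = i).card) := by
  have hN0 : 0 < N := hN
  have hrw0 : HPRI.lm N lam 0 = lam ⟨0, hN0⟩ := dif_pos hN0
  have hrw : lam (⟨0, by omega⟩ : Fin N) = HPRI.lm N lam 0 := by rw [hrw0]
  rw [hrw, HPRI.gpochEq N lam hanti hN0 1, HPRI.gpochEq N lam hanti hN0 0,
    HPRI.hookL N lam hanti hN0, HPRI.hookR N lam hanti hN0,
    HPRI.ttN N lam, HPRI.b3 N lam hanti hN0]
  have c1 : ∀ l, (∏ i ∈ range (HPRI.cc N lam (l + 1)), HPRI.Fq (1 + l) (N - i))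
      = HPRI.LA N lam (l + 1) := by
    intro l
    rw [HPRI.LA]
    exact Finset.prod_congr rfl (fun i _ => by rw [Nat.add_comm 1 l])
  have c0 : ∀ l, (∏ i ∈ range (HPRI.cc N lam (l + 1)), HPRI.Fq (0 + l) (N - i))
      = HPRI.RA N lam l := by
    intro l
    rw [HPRI.RA]
    exact Finset.prod_congr rfl (fun i _ => by rw [Nat.zero_add l])
  rw [Finset.prod_congr rfl (fun l _ => c1 l), Finset.prod_congr rfl (fun l _ => c0 l)]
  have hLBA : HPRI.LB N lam (HPRI.lm N lam 0) = 1 := by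
    rw [HPRI.LB, HPRI.cc_top N lam hanti hN0]
    simp
  have hRAA : HPRI.RA N lam (HPRI.lm N lam 0) = 1 := by
    rw [HPRI.RA, HPRI.cc_top N lam hanti hN0]
    simp
  have e1 : ∏ a ∈ range (HPRI.lm N lam 0 + 1), (HPRI.LA N lam a * HPRI.LB N lam a)
      = ((∏ l ∈ range (HPRI.lm N lam 0), HPRI.LA N lam (l + 1)) * HPRI.LA N lam 0)
        * ((∏ a ∈ range (HPRI.lm N lam 0), HPRI.LB N lam a)
            * HPRI.LB N lam (HPRI.lm N lam 0)) := by
    rw [Finset.prod_mul_distrib,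
      Finset.prod_range_succ' (fun a => HPRI.LA N lam a) (HPRI.lm N lam 0),
      Finset.prod_range_succ (fun a => HPRI.LB N lam a) (HPRI.lm N lam 0)]
  have e2 : ∏ a ∈ range (HPRI.lm N lam 0 + 1), (HPRI.RA N lam a * HPRI.RB N lam a)
      = ((∏ l ∈ range (HPRI.lm N lam 0), HPRI.RA N lam l) * HPRI.RA N lam (HPRI.lm N lam 0))
        * (HPRI.RB N lam 0
            * ∏ a ∈ range (HPRI.lm N lam 0), HPRI.RB N lam (a + 1)) := by
    rw [Finset.prod_mul_distrib,
      Finset.prod_range_succ (fun a => HPRI.RA N lam a) (HPRI.lm N lam 0),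
      Finset.prod_range_succ' (fun a => HPRI.RB N lam a) (HPRI.lm N lam 0)]
    ring
  have ekey : ∏ a ∈ range (HPRI.lm N lam 0 + 1), (HPRI.LA N lam a * HPRI.LB N lam a)
      = ∏ a ∈ range (HPRI.lm N lam 0 + 1), (HPRI.RA N lam a * HPRI.RB N lam a) :=
    Finset.prod_congr rfl (fun a _ => HPRI.keyLem N lam hanti a)
  have efin := e1.symm.trans (ekey.trans e2)
  rw [hLBA, hRAA] at efin
  linear_combination efin
end

section
/- Let λ = (λ₁ ≥ … ≥ λ_N ≥ 0) be a partition with at most N parts and exactly p ≥ 1 nonzero parts (so λ_p > 0 and λ_{p+1} = 0 if p < N), and let γ be the partition obtained from λ by replacing λ_p with λ_p − 1. Then the identity (q t^N; q, t)_λ · h_{q,t}(γ, qt) · (1 − t q^{λ_p}) · Π_{i=1}^{p−1} (1 − q^{λ_i − λ_p + 1} t^{p−i+1}) = (q t^N; q, t)_γ · h_{q,t}(λ, qt) · (1 − t^{N−p+1} q^{λ_p}) · Π_{i=1}^{p−1} (1 − q^{λ_i − λ_p + 1} t^{p−i}) holds in ℤ[q,t]. -/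
open Finset MvPolynomial

/-- The conjugate partition: `λ'_j = #{i : λ_i ≥ j}`. -/
def conjPart {N : ℕ} (lam : Fin N → ℕ) (j : ℕ) : ℕ :=
  (univ.filter fun i : Fin N => j ≤ lam i).card

/-- The `(q,t)`-hook product of a partition `λ` with argument `z`, using the classical
arm `λ_i − j` and leg `λ'_j − i` of the cell `(i,j)`:
`h_{q,t}(λ,z) = Π_{(i,j)∈λ} (1 − z q^{λ_i−j} t^{λ'_j−i})`. -/
noncomputable def hookP {N : ℕ} (lam : Fin N → ℕ) (z : Zqt) : Zqt :=
  ∏ i : Fin N, ∏ j ∈ Icc 1 (lam i),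
    (1 - z * qz ^ (lam i - j) * tz ^ (conjPart lam j - ((i : ℕ) + 1)))

/-- `(q t^N; q, t)_λ = Π_{i=1}^{N} Π_{l=0}^{λ_i−1} (1 − q^{1+l} t^{N+1−i})`. -/
noncomputable def gpochQTN {N : ℕ} (lam : Fin N → ℕ) : Zqt :=
  ∏ i : Fin N, ∏ l ∈ range (lam i), (1 - qz ^ (1 + l) * tz ^ (N - (i : ℕ)))

def extNat {N : ℕ} (lam : Fin N → ℕ) : ℕ → ℕ := fun k => if h : k < N then lam ⟨k, h⟩ else 0

noncomputable def rowP {N : ℕ} (lam : Fin N → ℕ) (k : ℕ) : Zqt :=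
  ∏ j ∈ Icc 1 (extNat lam k),
    (1 - (qz * tz) * qz ^ (extNat lam k - j) * tz ^ (conjPart lam j - (k + 1)))

lemma extNat_lt {N : ℕ} (lam : Fin N → ℕ) {k : ℕ} (h : k < N) : extNat lam k = lam ⟨k, h⟩ :=
  dif_pos h

lemma hookP_eq_rows {N : ℕ} (lam : Fin N → ℕ) :
    hookP lam (qz * tz) = ∏ k ∈ range N, rowP lam k := by
  rw [hookP, ← Fin.prod_univ_eq_prod_range (rowP lam) N]
  refine prod_congr rfl fun i _ => ?_
  simp [rowP, extNat_lt lam i.isLt]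

lemma aux_card (N p : ℕ) (h : p ≤ N) :
    (univ.filter fun i : Fin N => (i : ℕ) < p).card = p := by
  have : (univ.filter fun i : Fin N => (i : ℕ) < p)
      = (range p).attachFin (fun m hm => lt_of_lt_of_le (mem_range.mp hm) h) := by
    ext i; simp [Finset.mem_attachFin]
  rw [this, Finset.card_attachFin, Finset.card_range]

lemma aux_telescope (m : ℕ) (hm : 1 ≤ m) :
    ∏ i ∈ range m, (1 - qz ^ (m - i) * tz)
      = (∏ i ∈ range (m - 1), (1 - qz ^ (m - 1 - i) * tz)) * (1 - qz ^ m * tz) := by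
  obtain ⟨n, rfl⟩ : ∃ n, m = n + 1 := ⟨m - 1, by omega⟩
  rw [prod_range_succ', Nat.sub_zero]
  congr 1
  exact prod_congr rfl fun i _ => by rw [show n + 1 - (i + 1) = n + 1 - 1 - i from by omega]

set_option maxHeartbeats 2000000 in
/-- Let `λ` be a partition with at most `N` parts and exactly `p ≥ 1` nonzero
parts, and let `γ` be obtained from `λ` by replacing `λ_p` with `λ_p − 1`.  Then
`(qt^N;q,t)_λ · h_{q,t}(γ,qt) · (1 − t q^{λ_p}) · Π_{i=1}^{p−1}(1 − q^{λ_i−λ_p+1} t^{p−i+1})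
 = (qt^N;q,t)_γ · h_{q,t}(λ,qt) · (1 − t^{N−p+1} q^{λ_p}) · Π_{i=1}^{p−1}(1 − q^{λ_i−λ_p+1} t^{p−i})`
holds in `ℤ[q,t]`. -/
theorem hook_pochhammer_corner_removal
    (N p : ℕ) (hp : 1 ≤ p) (hpN : p ≤ N)
    (lam : Fin N → ℕ) (hanti : Antitone lam)
    (hpos : 0 < lam ⟨p - 1, by omega⟩) (hzero : ∀ j : Fin N, p ≤ (j : ℕ) → lam j = 0)
    (gam : Fin N → ℕ)
    (hgam : gam = fun j : Fin N => if (j : ℕ) = p - 1 then lam j - 1 else lam j) :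
    gpochQTN lam * hookP gam (qz * tz) * (1 - tz * qz ^ (lam ⟨p - 1, by omega⟩)) *
        ∏ i : Fin (p - 1),
          (1 - qz ^ (lam (Fin.castLE (by omega) i) - lam ⟨p - 1, by omega⟩ + 1) *
            tz ^ (p - (i : ℕ))) =
      gpochQTN gam * hookP lam (qz * tz) *
          (1 - tz ^ (N - p + 1) * qz ^ (lam ⟨p - 1, by omega⟩)) *
        ∏ i : Fin (p - 1),
          (1 - qz ^ (lam (Fin.castLE (by omega) i) - lam ⟨p - 1, by omega⟩ + 1) *
            tz ^ (p - 1 - (i : ℕ))) := by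
  have hpN' : p - 1 < N := by omega
  set i₀ : Fin N := ⟨p - 1, by omega⟩ with hi₀
  have hi₀v : (i₀ : ℕ) = p - 1 := rfl
  set m : ℕ := lam i₀ with hm
  have hm1 : 1 ≤ m := hpos
  -- basic values
  have hlam_i : ∀ i : Fin N, (i : ℕ) < p → m ≤ lam i := by
    intro i hi
    refine hanti ?_
    rw [Fin.le_def, hi₀v]
    omega
  have hgv : ∀ i : Fin N, gam i = if (i : ℕ) = p - 1 then lam i - 1 else lam i :=
    fun i => by rw [hgam]
  have hgvne : ∀ i : Fin N, (i : ℕ) ≠ p - 1 → gam i = lam i :=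
    fun i h => by rw [hgv i, if_neg h]
  have hlam₀ : ∀ i : Fin N, (i : ℕ) = p - 1 → lam i = m := by
    intro i h
    have : i = i₀ := Fin.ext (h.trans hi₀v.symm)
    rw [this]
  have hgv₀ : gam i₀ = m - 1 := by
    rw [hgv i₀, if_pos hi₀v, hlam₀ i₀ hi₀v]
  -- conjugate partition facts
  have hcl : ∀ j : ℕ, 1 ≤ j → j ≤ m → conjPart lam j = p := by
    intro j h1 h2
    have he : (univ.filter fun i : Fin N => j ≤ lam i)
        = univ.filter fun i : Fin N => (i : ℕ) < p := by
      refine filter_congr fun i _ => ?_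
      constructor
      · intro h
        by_contra hc
        push_neg at hc
        rw [hzero i (by omega)] at h
        omega
      · intro h
        exact le_trans h2 (hlam_i i h)
    rw [conjPart, he, aux_card N p hpN]
  have hcg1 : ∀ j : ℕ, 1 ≤ j → j ≤ m - 1 → conjPart gam j = p := by
    intro j h1 h2
    have he : (univ.filter fun i : Fin N => j ≤ gam i)
        = univ.filter fun i : Fin N => (i : ℕ) < p := by
      refine filter_congr fun i _ => ?_
      constructor
      · intro h
        by_contra hc
        push_neg at hc
        rw [hgvne i (by omega), hzero i (by omega)] at h
        omega
      · intro h
        by_cases hip : (i : ℕ) = p - 1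
        · rw [hgv i, if_pos hip, hlam₀ i hip]; omega
        · rw [hgvne i hip]
          have := hlam_i i h
          omega
    rw [conjPart, he, aux_card N p hpN]
  have hcgm : conjPart gam m = p - 1 := by
    have he : (univ.filter fun i : Fin N => m ≤ gam i)
        = univ.filter fun i : Fin N => (i : ℕ) < p - 1 := by
      refine filter_congr fun i _ => ?_
      constructor
      · intro h
        by_contra hc
        push_neg at hc
        by_cases hip : (i : ℕ) = p - 1
        · rw [hgv i, if_pos hip, hlam₀ i hip] at h; omega
        · rw [hgvne i hip, hzero i (by omega)] at h; omega
      · intro h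
        rw [hgvne i (by omega)]
        exact hlam_i i (by omega)
    rw [conjPart, he, aux_card N (p - 1) (by omega)]
  have hceq : ∀ j : ℕ, j ≠ m → conjPart gam j = conjPart lam j := by
    intro j hj
    unfold conjPart
    refine congrArg Finset.card (filter_congr fun i _ => ?_)
    by_cases hip : (i : ℕ) = p - 1
    · rw [hgv i, if_pos hip, hlam₀ i hip]
      omega
    · rw [hgvne i hip]
  -- row p-1 of lam
  have hrowL : rowP lam (p - 1) = ∏ i ∈ range m, (1 - qz ^ (m - i) * tz) := by
    rw [rowP, extNat_lt lam hpN', show lam (⟨p - 1, hpN'⟩ : Fin N) = m from rfl]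
    rw [show Icc 1 m = Ico 1 (m + 1) from (Finset.Ico_add_one_right_eq_Icc 1 m).symm,
      prod_Ico_eq_prod_range]
    simp only [Nat.add_sub_cancel]
    refine prod_congr rfl fun i hi => ?_
    rw [mem_range] at hi
    rw [hcl (1 + i) (by omega) (by omega),
      show p - (p - 1 + 1) = 0 from by omega, pow_zero, mul_one,
      show m - i = m - (1 + i) + 1 from by omega, pow_succ]
    ring
  -- row p-1 of gam
  have hrowG : rowP gam (p - 1) = ∏ i ∈ range (m - 1), (1 - qz ^ (m - 1 - i) * tz) := by
    rw [rowP, extNat_lt gam hpN', show gam (⟨p - 1, hpN'⟩ : Fin N) = m - 1 from hgv₀]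
    rw [show Icc 1 (m - 1) = Ico 1 (m - 1 + 1) from (Finset.Ico_add_one_right_eq_Icc 1 (m - 1)).symm,
      prod_Ico_eq_prod_range]
    simp only [Nat.add_sub_cancel]
    refine prod_congr rfl fun i hi => ?_
    rw [mem_range] at hi
    rw [hcg1 (1 + i) (by omega) (by omega),
      show p - (p - 1 + 1) = 0 from by omega, pow_zero, mul_one,
      show m - 1 - i = m - 1 - (1 + i) + 1 from by omega, pow_succ]
    ring
  have hrow_main : rowP lam (p - 1) = rowP gam (p - 1) * (1 - qz ^ m * tz) := by
    rw [hrowL, hrowG, aux_telescope m hm1]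
  -- row swap for k < p-1
  have hswap : ∀ k, k < p - 1 →
      rowP lam k * (1 - qz ^ (extNat lam k - m + 1) * tz ^ (p - 1 - k))
        = rowP gam k * (1 - qz ^ (extNat lam k - m + 1) * tz ^ (p - k)) := by
    intro k hk
    have hkN : k < N := by omega
    have hAg : extNat gam k = extNat lam k := by
      rw [extNat_lt gam hkN, extNat_lt lam hkN, hgvne ⟨k, hkN⟩ (by simpa using by omega)]
    have hmA : m ≤ extNat lam k := by
      rw [extNat_lt lam hkN]
      exact hlam_i ⟨k, hkN⟩ (by simpa using by omega)
    have hmem : m ∈ Icc 1 (extNat lam k) := mem_Icc.mpr ⟨hm1, hmA⟩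
    rw [rowP, rowP, hAg,
      ← Finset.mul_prod_erase _ _ hmem, ← Finset.mul_prod_erase _ _ hmem]
    have hE : (∏ j ∈ (Icc 1 (extNat lam k)).erase m,
          (1 - qz * tz * qz ^ (extNat lam k - j) * tz ^ (conjPart gam j - (k + 1))))
        = ∏ j ∈ (Icc 1 (extNat lam k)).erase m,
          (1 - qz * tz * qz ^ (extNat lam k - j) * tz ^ (conjPart lam j - (k + 1))) :=
      prod_congr rfl fun j hj => by rw [hceq j (Finset.ne_of_mem_erase hj)]
    rw [hE, hcl m hm1 le_rfl, hcgm,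
      show p - k = p - (k + 1) + 1 from by omega,
      show p - 1 - k = p - 1 - (k + 1) + 1 from by omega]
    ring
  have hProdSwap :
      (∏ k ∈ range (p - 1), rowP lam k) *
          (∏ k ∈ range (p - 1), (1 - qz ^ (extNat lam k - m + 1) * tz ^ (p - 1 - k)))
        = (∏ k ∈ range (p - 1), rowP gam k) *
          (∏ k ∈ range (p - 1), (1 - qz ^ (extNat lam k - m + 1) * tz ^ (p - k))) := by
    rw [← prod_mul_distrib, ← prod_mul_distrib]
    exact prod_congr rfl fun k hk => hswap k (mem_range.mp hk)
  -- splitting the hook products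
  have htail : ∀ f : Fin N → ℕ, (∀ i : Fin N, p ≤ (i : ℕ) → f i = 0) →
      hookP f (qz * tz) = (∏ k ∈ range (p - 1), rowP f k) * rowP f (p - 1) := by
    intro f hf
    rw [hookP_eq_rows, range_eq_Ico, ← Finset.prod_Ico_consecutive _ (Nat.zero_le p) hpN,
      ← range_eq_Ico]
    have h2 : ∏ k ∈ Ico p N, rowP f k = 1 := by
      refine prod_eq_one fun k hk => ?_
      have hk' := mem_Ico.mp hk
      rw [rowP, extNat_lt f hk'.2, hf ⟨k, hk'.2⟩ (by simpa using hk'.1)]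
      simp
    rw [h2, mul_one]
    conv_lhs => rw [show p = (p - 1) + 1 from by omega]
    rw [prod_range_succ]
  have hhL : hookP lam (qz * tz) = (∏ k ∈ range (p - 1), rowP lam k) * rowP lam (p - 1) :=
    htail lam hzero
  have hhG : hookP gam (qz * tz) = (∏ k ∈ range (p - 1), rowP gam k) * rowP gam (p - 1) :=
    htail gam fun i hi => by rw [hgvne i (by omega), hzero i hi]
  -- the generalized Pochhammer symbols
  have hgp : gpochQTN lam = gpochQTN gam * (1 - qz ^ m * tz ^ (N - p + 1)) := by
    have e1 := Finset.mul_prod_erase univ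
      (fun i : Fin N => ∏ l ∈ range (lam i), (1 - qz ^ (1 + l) * tz ^ (N - (i : ℕ))))
      (mem_univ i₀)
    have e2 := Finset.mul_prod_erase univ
      (fun i : Fin N => ∏ l ∈ range (gam i), (1 - qz ^ (1 + l) * tz ^ (N - (i : ℕ))))
      (mem_univ i₀)
    rw [gpochQTN, gpochQTN, ← e1, ← e2]
    beta_reduce
    have hE : (∏ i ∈ univ.erase i₀, ∏ l ∈ range (gam i), (1 - qz ^ (1 + l) * tz ^ (N - (i : ℕ))))
        = ∏ i ∈ univ.erase i₀, ∏ l ∈ range (lam i), (1 - qz ^ (1 + l) * tz ^ (N - (i : ℕ))) :=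
      prod_congr rfl fun i hi => by
        rw [hgvne i fun h => (Finset.ne_of_mem_erase hi) (Fin.ext (h.trans hi₀v.symm))]
    rw [hE, hgv₀, show lam i₀ = m from rfl]
    have hsplit : (∏ l ∈ range m, (1 - qz ^ (1 + l) * tz ^ (N - (i₀ : ℕ))))
        = (∏ l ∈ range (m - 1), (1 - qz ^ (1 + l) * tz ^ (N - (i₀ : ℕ))))
          * (1 - qz ^ m * tz ^ (N - p + 1)) := by
      obtain ⟨n, hn⟩ : ∃ n, m = n + 1 := ⟨m - 1, by omega⟩
      rw [hn, prod_range_succ]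
      simp only [Nat.add_sub_cancel]
      congr 1
      rw [show N - (p - 1) = N - p + 1 from by omega, show 1 + n = n + 1 from by omega]
    rw [hsplit]
    ring
  -- the corner factors
  have hFinL : (∏ i : Fin (p - 1),
        (1 - qz ^ (lam (Fin.castLE (by omega : p - 1 ≤ N) i) - m + 1) * tz ^ (p - (i : ℕ))))
      = ∏ k ∈ range (p - 1), (1 - qz ^ (extNat lam k - m + 1) * tz ^ (p - k)) := by
    rw [← Fin.prod_univ_eq_prod_range (fun k => 1 - qz ^ (extNat lam k - m + 1) * tz ^ (p - k))
      (p - 1)]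
    refine prod_congr rfl fun i _ => ?_
    rw [extNat_lt lam (show (i : ℕ) < N by omega)]
    rfl
  have hFinG : (∏ i : Fin (p - 1),
        (1 - qz ^ (lam (Fin.castLE (by omega : p - 1 ≤ N) i) - m + 1) * tz ^ (p - 1 - (i : ℕ))))
      = ∏ k ∈ range (p - 1), (1 - qz ^ (extNat lam k - m + 1) * tz ^ (p - 1 - k)) := by
    rw [← Fin.prod_univ_eq_prod_range
      (fun k => 1 - qz ^ (extNat lam k - m + 1) * tz ^ (p - 1 - k)) (p - 1)]
    refine prod_congr rfl fun i _ => ?_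
    rw [extNat_lt lam (show (i : ℕ) < N by omega)]
    rfl
  rw [hhL, hhG, hgp, hrow_main, hFinL, hFinG]
  linear_combination
    (-(gpochQTN gam * (1 - qz ^ m * tz ^ (N - p + 1)) * rowP gam (p - 1)
      * (1 - qz ^ m * tz))) * hProdSwap
end

section
/- Let N, k, m be integers with k ≥ 1, m ≥ 2 and 2k ≤ N, and let λ be a partition with λ₁ ≤ m and at most k nonzero parts (i.e. λ ⊆ (m^k)). Let q₀, t₀ be nonzero complex numbers, neither of which is a root of unity, satisfying q₀^{m−1} t₀^{N−k+1} = 1 and, for every common divisor e > 1 of m−1 and N−k+1, q₀^{(m−1)/e} t₀^{(N−k+1)/e} ≠ 1. Then Π_{i=1}^{k} Π_{j=1}^{λ_i} (1 − t₀^{N+1−i} q₀^{j−1}) = 0 if and only if λ = (m^k). (This product is the specialization at (q₀,t₀) of (t^N; q, t)_λ, which governs the vanishing of the principal specialization P_λ(⟨0⟩); consequently P_{(m^k)}(⟨0⟩)/P_λ(⟨0⟩) = 0 for all partitions λ strictly contained in (m^k).) -/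
open Finset

lemma pow_injective_of_not_root_of_unity (t : ℂ) (ht : t ≠ 0)
    (hru : ∀ r : ℕ, 0 < r → t ^ r ≠ 1) {x y : ℕ} (h : t ^ x = t ^ y) : x = y := by
  by_contra hne
  rcases Nat.lt_or_ge x y with hlt | hge
  · have h1 : t ^ x * t ^ (y - x) = t ^ x * 1 := by
      rw [← pow_add, mul_one, show x + (y - x) = y by omega, h]
    exact hru _ (by omega) (mul_left_cancel₀ (pow_ne_zero x ht) h1)
  · have h1 : t ^ y * t ^ (x - y) = t ^ y * 1 := by
      rw [← pow_add, mul_one, show y + (x - y) = x by omega, ← h]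
    exact hru _ (by omega) (mul_left_cancel₀ (pow_ne_zero y ht) h1)

/-- Let `k ≥ 1`, `m ≥ 2`, `2k ≤ N`, and let `λ ⊆ (m^k)` be a partition.
If `q₀, t₀` are nonzero complex numbers, neither a root of unity, with
`q₀^{m−1} t₀^{N−k+1} = 1` and no lower-order such relation, then
`Π_{i=1}^{k} Π_{j=1}^{λ_i} (1 − t₀^{N+1−i} q₀^{j−1}) = 0` if and only if `λ = (m^k)`. -/
theorem pochhammer_specialization_vanishing_iff
    (N k m : ℕ) (hk : 1 ≤ k) (hm : 2 ≤ m) (hkN : 2 * k ≤ N)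
    (lam : Fin k → ℕ) (hanti : Antitone lam) (hsub : ∀ i, lam i ≤ m)
    (q₀ t₀ : ℂ) (hq₀ : q₀ ≠ 0) (ht₀ : t₀ ≠ 0)
    (hqru : ∀ r : ℕ, 0 < r → q₀ ^ r ≠ 1) (htru : ∀ r : ℕ, 0 < r → t₀ ^ r ≠ 1)
    (hrel : q₀ ^ (m - 1) * t₀ ^ (N - k + 1) = 1)
    (hmin : ∀ e : ℕ, 1 < e → e ∣ (m - 1) → e ∣ (N - k + 1) →
      q₀ ^ ((m - 1) / e) * t₀ ^ ((N - k + 1) / e) ≠ 1) :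
    (∏ i : Fin k, ∏ j ∈ range (lam i), (1 - t₀ ^ (N - (i : ℕ)) * q₀ ^ j)) = 0 ↔
      lam = fun _ => m := by
  have hkle : k ≤ N := by omega
  constructor
  · intro h
    rw [Finset.prod_eq_zero_iff] at h
    obtain ⟨i, -, hi⟩ := h
    rw [Finset.prod_eq_zero_iff] at hi
    obtain ⟨j, hjmem, hj⟩ := hi
    rw [Finset.mem_range] at hjmem
    have heq : t₀ ^ (N - (i : ℕ)) * q₀ ^ j = 1 := by
      exact (sub_eq_zero.mp hj).symm
    set A := m - 1 with hAdef
    set B := N - k + 1 with hBdef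
    set a := N - (i : ℕ) with hadef
    have hA : 0 < A := by omega
    have hB : 0 < B := by omega
    have hia : (i : ℕ) < k := i.isLt
    have haB : B ≤ a := by omega
    -- raise relations
    have e1 : q₀ ^ (A * j) * t₀ ^ (B * j) = 1 := by
      have := congrArg (· ^ j) hrel
      simpa [mul_pow, ← pow_mul, mul_comm] using this
    have e2 : q₀ ^ (A * j) * t₀ ^ (a * A) = 1 := by
      have := congrArg (· ^ A) heq
      simp only [mul_pow, ← pow_mul, one_pow] at this
      rw [mul_comm (t₀ ^ ((N - ↑i) * A)) _] at this
      rw [show j * A = A * j by ring] at this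
      rw [← this]
    have et : t₀ ^ (B * j) = t₀ ^ (a * A) :=
      mul_left_cancel₀ (pow_ne_zero _ hq₀) (e1.trans e2.symm)
    have hexp : B * j = a * A := pow_injective_of_not_root_of_unity t₀ ht₀ htru et
    have hjA : j ≤ A := by have := hsub i; omega
    have hja : j = A ∧ a = B := by
      constructor
      · nlinarith [Nat.mul_le_mul_left B hjA, Nat.mul_le_mul_right A haB]
      · nlinarith [Nat.mul_le_mul_left B hjA, Nat.mul_le_mul_right A haB]
    have hlami : lam i = m := by have := hsub i; omega
    have hik : (i : ℕ) = k - 1 := by omega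
    funext i'
    have hle : i' ≤ i := by
      apply Fin.le_def.mpr; omega
    have := hanti hle
    have := hsub i'
    omega
  · intro h
    subst h
    apply Finset.prod_eq_zero (Finset.mem_univ (⟨k - 1, by omega⟩ : Fin k))
    apply Finset.prod_eq_zero (Finset.mem_range.mpr (show m - 1 < m by omega))
    have : t₀ ^ (N - (k - 1)) * q₀ ^ (m - 1) = 1 := by
      rw [show N - (k - 1) = N - k + 1 by omega, mul_comm]; exact hrel
    simp [this]
end

section
/- Let a and b be positive integers and d = gcd(a,b). Let Z = {(q,t) ∈ ℂ × ℂ : q^a t^b = 1 and, for every integer e > 1 dividing both a and b, q^{a/e} t^{b/e} ≠ 1}. Then Z, with the subspace topology from ℂ², has exactly φ(d) connected components, where φ is Euler's totient function. (In particular, if gcd(a,b) = 1 then the complex surface {(q,t) : q^a t^b = 1} is connected.) -/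
private lemma bezout_param' {G : Type*} [CommGroup G] (x y : G) (A B : ℕ)
    (hAB : Nat.Coprime A B) (hxy : x ^ A * y ^ B = 1) :
    ∃ w : G, w ^ B = x ∧ w⁻¹ ^ A = y := by
  obtain ⟨n, m, hmn⟩ := hAB.isCoprime
  have h1 : x ^ (A : ℤ) * y ^ (B : ℤ) = 1 := by
    simpa [zpow_natCast] using hxy
  have hyB : y ^ (B : ℤ) = (x ^ (A : ℤ))⁻¹ := by
    rw [eq_inv_iff_mul_eq_one, mul_comm]; exact h1
  have hxA : x ^ (A : ℤ) = (y ^ (B : ℤ))⁻¹ := by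
    rw [eq_inv_iff_mul_eq_one]; exact h1
  have key : ∀ k : ℤ, (x ^ m * y ^ (-n)) ^ k = x ^ (m * k) * y ^ (-n * k) := by
    intro k
    rw [mul_zpow, ← zpow_mul, ← zpow_mul]
  refine ⟨x ^ m * y ^ (-n), ?_, ?_⟩
  · have : (x ^ m * y ^ (-n)) ^ (B : ℤ) = x := by
      rw [key]
      have : y ^ (-n * (B : ℤ)) = x ^ ((A : ℤ) * n) := by
        rw [show -n * (B:ℤ) = (B:ℤ) * -n by ring, zpow_mul, hyB, ← zpow_neg, ← zpow_mul]
        ring_nf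
      rw [this, ← zpow_add, show m * (B:ℤ) + (A:ℤ)*n = n * A + m * B by ring, hmn, zpow_one]
    simpa [zpow_natCast] using this
  · have : ((x ^ m * y ^ (-n))⁻¹) ^ (A : ℤ) = y := by
      rw [inv_zpow, key]
      have : x ^ (m * (A : ℤ)) = y ^ (-(B:ℤ) * m) := by
        rw [show m * (A:ℤ) = (A:ℤ) * m by ring, zpow_mul, hxA, ← zpow_neg, ← zpow_mul]
      rw [this, ← zpow_add, ← zpow_neg,
        show -(-(B:ℤ) * m + -n * (A:ℤ)) = n * A + m * B by ring, hmn, zpow_one]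
    simpa [zpow_natCast] using this

private lemma alg_cancel' (q t u : ℂ) (hu : u ≠ 0) (A B m : ℕ) :
    (q * u ^ B) ^ (A * m) * (t * u⁻¹ ^ A) ^ (B * m) = q ^ (A * m) * t ^ (B * m) := by
  have hX : u ^ (A * (B * m)) ≠ 0 := pow_ne_zero _ hu
  rw [mul_pow, mul_pow, ← pow_mul, ← pow_mul, inv_pow,
    show B * (A * m) = A * (B * m) by ring]
  field_simp

/-- Let `a, b` be positive integers and `d = gcd(a,b)`.  The locus
`Z = {(q,t) ∈ ℂ² : q^a t^b = 1` and `q^{a/e} t^{b/e} ≠ 1` for every common divisor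
`e > 1` of `a` and `b}` has exactly `φ(d)` connected components. -/
theorem singular_parameter_locus_connected_components
    (a b : ℕ) (ha : 0 < a) (hb : 0 < b) :
    Nat.card (ConnectedComponents
      {p : ℂ × ℂ // p.1 ^ a * p.2 ^ b = 1 ∧
        ∀ e : ℕ, 1 < e → e ∣ a → e ∣ b → p.1 ^ (a / e) * p.2 ^ (b / e) ≠ 1}) =
      Nat.totient (Nat.gcd a b) := by
  classical
  set Z := {p : ℂ × ℂ // p.1 ^ a * p.2 ^ b = 1 ∧
      ∀ e : ℕ, 1 < e → e ∣ a → e ∣ b → p.1 ^ (a / e) * p.2 ^ (b / e) ≠ 1} with hZ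
  set d := Nat.gcd a b with hddef
  have hd : 0 < d := Nat.gcd_pos_of_pos_left b ha
  set A := a / d with hAdef
  set B := b / d with hBdef
  have hAd : A * d = a := Nat.div_mul_cancel (Nat.gcd_dvd_left a b)
  have hBd : B * d = b := Nat.div_mul_cancel (Nat.gcd_dvd_right a b)
  have hA : 0 < A := by
    rcases Nat.eq_zero_or_pos A with h | h
    · rw [h, zero_mul] at hAd; omega
    · exact h
  have hcop : Nat.Coprime A B := Nat.coprime_div_gcd_div_gcd hd
  have hda : d ∣ a := Nat.gcd_dvd_left a b
  have hdb : d ∣ b := Nat.gcd_dvd_right a b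
  have hgcd : ∀ e : ℕ, e ∣ a → e ∣ b → e ∣ d := fun e h1 h2 => Nat.dvd_gcd h1 h2
  clear_value d A B
  -- divisor arithmetic
  have hdiv : ∀ e : ℕ, e ∣ d → a / e = A * (d / e) ∧ b / e = B * (d / e) := by
    intro e he
    constructor
    · rw [← hAd, Nat.mul_div_assoc A he]
    · rw [← hBd, Nat.mul_div_assoc B he]
  -- the value q^A * t^B is a primitive d-th root of unity on Z
  have hne : ∀ p : Z, p.val.1 ≠ 0 ∧ p.val.2 ≠ 0 := by
    rintro ⟨⟨q, t⟩, h1, -⟩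
    constructor <;> rintro rfl <;> simp [zero_pow ha.ne', zero_pow hb.ne'] at h1
  have hprim : ∀ p : Z, IsPrimitiveRoot (p.val.1 ^ A * p.val.2 ^ B) d := by
    rintro ⟨⟨q, t⟩, h1, h2⟩
    set z := q ^ A * t ^ B with hz
    have hzd : z ^ d = 1 := by
      rw [hz, mul_pow, ← pow_mul, ← pow_mul, hAd, hBd]; exact h1
    have hkdvd : orderOf z ∣ d := orderOf_dvd_of_pow_eq_one hzd
    have hk0 : 0 < orderOf z := by
      refine orderOf_pos_iff.mpr ?_
      exact isOfFinOrder_iff_pow_eq_one.mpr ⟨d, hd, hzd⟩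
    have hord : orderOf z = d := by
      by_contra hneq
      set k := orderOf z with hk
      set e := d / k with he
      have hke : k * e = d := Nat.mul_div_cancel' hkdvd
      have hed : e ∣ d := Nat.div_dvd_of_dvd hkdvd
      have he1 : 1 < e := by
        rcases Nat.lt_or_ge e 2 with h | h
        · interval_cases e <;> omega
        · omega
      have hdk : d / e = k := Nat.div_div_self hkdvd hd.ne'
      have hea : e ∣ a := hed.trans hda
      have heb : e ∣ b := hed.trans hdb
      refine h2 e he1 hea heb ?_
      have h3 := (hdiv e hed).1
      have h4 := (hdiv e hed).2
      rw [h3, h4, hdk, pow_mul, pow_mul, ← mul_pow, ← hz]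
      exact pow_orderOf_eq_one z
    exact ⟨hzd, fun l hl => hord ▸ orderOf_dvd_of_pow_eq_one hl⟩
  -- the locally constant map to primitive roots
  set R := {z : ℂ // z ∈ primitiveRoots d ℂ} with hR
  haveI : TotallyDisconnectedSpace R := inferInstance
  set F : Z → R := fun p => ⟨p.val.1 ^ A * p.val.2 ^ B,
    (mem_primitiveRoots hd).mpr (hprim p)⟩ with hF
  have hFc : Continuous F := by
    apply Continuous.subtype_mk
    exact ((continuous_fst.comp continuous_subtype_val).pow A).mul
      ((continuous_snd.comp continuous_subtype_val).pow B)
  set G := hFc.connectedComponentsLift with hG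
  have hGsurj : Function.Surjective G := by
    rintro ⟨ζ, hζmem⟩
    have hζ : IsPrimitiveRoot ζ d := (mem_primitiveRoots hd).mp hζmem
    obtain ⟨q, hq⟩ := IsAlgClosed.exists_pow_nat_eq ζ hA
    have hp : ((q, 1) : ℂ × ℂ).1 ^ a * ((q, 1) : ℂ × ℂ).2 ^ b = 1 ∧
        ∀ e : ℕ, 1 < e → e ∣ a → e ∣ b →
          ((q, 1) : ℂ × ℂ).1 ^ (a / e) * ((q, 1) : ℂ × ℂ).2 ^ (b / e) ≠ 1 := by
      constructor
      · show q ^ a * (1 : ℂ) ^ b = 1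
        rw [one_pow, mul_one, ← hAd, pow_mul, hq]
        exact hζ.pow_eq_one
      · intro e he1 hea heb h
        have hed : e ∣ d := hgcd e hea heb
        have h3 := (hdiv e hed).1
        rw [h3, one_pow, mul_one, pow_mul, hq] at h
        have hdvd := hζ.dvd_of_pow_eq_one _ h
        have hpos : 0 < d / e := Nat.div_pos (Nat.le_of_dvd hd hed) (by omega)
        have hlt : d / e < d := Nat.div_lt_self hd he1
        exact absurd (Nat.le_of_dvd hpos hdvd) (by omega)
    refine ⟨ConnectedComponents.mk (⟨(q, 1), hp⟩ : Z), ?_⟩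
    rw [hG, hFc.connectedComponentsLift_apply_coe]
    apply Subtype.ext
    show q ^ A * (1 : ℂ) ^ B = ζ
    rw [one_pow, mul_one, hq]
  have hGinj : Function.Injective G := by
    intro c₁ c₂ hc
    obtain ⟨p₁, rfl⟩ := ConnectedComponents.surjective_coe c₁
    obtain ⟨p₂, rfl⟩ := ConnectedComponents.surjective_coe c₂
    rw [hG, hFc.connectedComponentsLift_apply_coe,
      hFc.connectedComponentsLift_apply_coe] at hc
    have hFeq : p₁.val.1 ^ A * p₁.val.2 ^ B = p₂.val.1 ^ A * p₂.val.2 ^ B :=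
      congrArg Subtype.val hc
    obtain ⟨hq1, ht1⟩ := hne p₁
    obtain ⟨hq2, ht2⟩ := hne p₂
    -- set up units
    set xu : ℂˣ := Units.mk0 p₂.val.1 hq2 * (Units.mk0 p₁.val.1 hq1)⁻¹ with hxu
    set yu : ℂˣ := Units.mk0 p₂.val.2 ht2 * (Units.mk0 p₁.val.2 ht1)⁻¹ with hyu
    have hxyu : xu ^ A * yu ^ B = 1 := by
      ext
      push_cast [hxu, hyu, Units.val_mk0]
      rw [mul_pow, mul_pow, inv_pow, inv_pow, mul_mul_mul_comm, ← mul_inv, ← hFeq]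
      exact mul_inv_cancel₀ (mul_ne_zero (pow_ne_zero _ hq1) (pow_ne_zero _ ht1))
    obtain ⟨w, hwB, hwA⟩ := bezout_param' xu yu A B hcop hxyu
    obtain ⟨s, hs⟩ : ∃ s, Complex.exp s = (w : ℂ) := by
      have : (w : ℂ) ∈ Set.range Complex.exp := by
        rw [Complex.range_exp]
        exact w.ne_zero
      exact this
    -- the connected curve through p₁
    have key1 : ∀ q t u : ℂ, u ≠ 0 → q ^ a * t ^ b = 1 →
        (q * u ^ B) ^ a * (t * u⁻¹ ^ A) ^ b = 1 := by
      intro q t u hu h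
      rw [← hAd, ← hBd] at h ⊢
      rw [alg_cancel' _ _ _ hu]
      exact h
    have key2 : ∀ q t u : ℂ, u ≠ 0 → ∀ e : ℕ, e ∣ d →
        (q * u ^ B) ^ (a / e) * (t * u⁻¹ ^ A) ^ (b / e) = q ^ (a / e) * t ^ (b / e) := by
      intro q t u hu e hed
      rw [(hdiv e hed).1, (hdiv e hed).2, alg_cancel' _ _ _ hu]
    have hmemg : ∀ s : ℂ,
        (p₁.val.1 * Complex.exp s ^ B) ^ a * (p₁.val.2 * Complex.exp (-s) ^ A) ^ b = 1 ∧
        ∀ e : ℕ, 1 < e → e ∣ a → e ∣ b →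
          (p₁.val.1 * Complex.exp s ^ B) ^ (a / e) *
            (p₁.val.2 * Complex.exp (-s) ^ A) ^ (b / e) ≠ 1 := by
      intro s
      have hu : Complex.exp s ≠ 0 := Complex.exp_ne_zero s
      have hexpneg : Complex.exp (-s) = (Complex.exp s)⁻¹ := Complex.exp_neg s
      constructor
      · rw [hexpneg]
        exact key1 _ _ _ hu p₁.prop.1
      · intro e he1 hea heb
        rw [hexpneg, key2 _ _ _ hu e (hgcd e hea heb)]
        exact p₁.prop.2 e he1 hea heb
    set g : ℂ → Z := fun s =>
      ⟨(p₁.val.1 * Complex.exp s ^ B, p₁.val.2 * Complex.exp (-s) ^ A), hmemg s⟩ with hgdef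
    have hgc : Continuous g := by
      apply Continuous.subtype_mk
      exact (continuous_const.mul (Complex.continuous_exp.pow B)).prodMk
        (continuous_const.mul ((Complex.continuous_exp.comp continuous_neg).pow A))
    have hg0 : g 0 = p₁ := by
      apply Subtype.ext
      simp [hgdef, Complex.exp_zero]
    have hgs : g s = p₂ := by
      apply Subtype.ext
      have h1 : (w : ℂ) ^ B = p₂.val.1 * (p₁.val.1)⁻¹ := by
        have := congrArg (Units.val) hwB
        push_cast [hxu] at this
        simpa using this
      have h2 : ((w : ℂ)⁻¹) ^ A = p₂.val.2 * (p₁.val.2)⁻¹ := by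
        have := congrArg (Units.val) hwA
        push_cast [hyu] at this
        simpa using this
      have hexpneg : Complex.exp (-s) = (Complex.exp s)⁻¹ := Complex.exp_neg s
      show (p₁.val.1 * Complex.exp s ^ B, p₁.val.2 * Complex.exp (-s) ^ A) = p₂.val
      rw [hexpneg, hs, h1, h2]
      have e1 : p₁.val.1 * (p₂.val.1 * (p₁.val.1)⁻¹) = p₂.val.1 := by
        field_simp
      have e2 : p₁.val.2 * (p₂.val.2 * (p₁.val.2)⁻¹) = p₂.val.2 := by
        field_simp
      rw [e1, e2]
    have hp₂mem : p₂ ∈ connectedComponent p₁ := by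
      have hconn : IsConnected (Set.range g) := isConnected_range hgc
      have h0 : p₁ ∈ Set.range g := ⟨0, hg0⟩
      exact hconn.subset_connectedComponent h0 ⟨s, hgs⟩
    exact (ConnectedComponents.coe_eq_coe'.mpr hp₂mem).symm
  have hcard := Nat.card_eq_of_bijective G ⟨hGinj, hGsurj⟩
  rw [hcard, hR]
  rw [Nat.card_eq_fintype_card, Fintype.card_coe, Complex.card_primitiveRoots]
end

section
/- Let q and t be nonzero complex numbers, neither of which is a root of unity. Let m, n be positive integers with d = gcd(m,n), and suppose q^m t^n = 1. Then for any integers a, b with q^a t^b = 1 there exists an integer j such that a = j·(m/d) and b = j·(n/d). -/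
lemma zpow_eq_one_imp (q : ℂ) (hq : q ≠ 0) (hqru : ∀ r : ℕ, 0 < r → q ^ r ≠ 1)
    (k : ℤ) (h : q ^ k = 1) : k = 0 := by
  have hk : q ^ (k.natAbs : ℕ) = 1 := by
    rcases Int.natAbs_eq k with he | he
    · rw [he] at h; rwa [zpow_natCast] at h
    · rw [he, zpow_neg, inv_eq_one, zpow_natCast] at h; exact h
  by_contra hk0
  exact hqru k.natAbs (Int.natAbs_pos.mpr hk0) hk

/-- Let `q` and `t` be nonzero complex numbers, neither a root of unity.
Let `m, n` be positive integers with `d = gcd(m,n)`, and suppose `q^m * t^n = 1`.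
Then for any integers `a, b` with `q^a * t^b = 1` there exists an integer `j` such
that `a = j*(m/d)` and `b = j*(n/d)`. -/
theorem rectangular_macdonald_monomial_relations
    (q t : ℂ) (hq : q ≠ 0) (ht : t ≠ 0)
    (hqru : ∀ r : ℕ, 0 < r → q ^ r ≠ 1) (htru : ∀ r : ℕ, 0 < r → t ^ r ≠ 1)
    (m n : ℕ) (hm : 0 < m) (hn : 0 < n) (d : ℕ) (hd : d = Nat.gcd m n)
    (hrel : q ^ m * t ^ n = 1)
    (a b : ℤ) (hab : q ^ a * t ^ b = 1) :
    ∃ j : ℤ, a = j * ((m / d : ℕ) : ℤ) ∧ b = j * ((n / d : ℕ) : ℤ) := by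
  have hrel' : q ^ (m : ℤ) * t ^ (n : ℤ) = 1 := by
    rwa [zpow_natCast, zpow_natCast]
  have h1 : q ^ (a * (n : ℤ)) = t ^ (-(b * (n : ℤ))) := by
    have : q ^ a = (t ^ b)⁻¹ := eq_inv_of_mul_eq_one_left hab
    rw [zpow_mul, this, ← zpow_neg, ← zpow_mul, neg_mul]
  have h2 : q ^ ((m : ℤ) * b) = t ^ (-(b * (n : ℤ))) := by
    have : q ^ (m : ℤ) = (t ^ (n : ℤ))⁻¹ := eq_inv_of_mul_eq_one_left hrel'
    rw [zpow_mul, this, ← zpow_neg, ← zpow_mul]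
    ring_nf
  have h3 : q ^ (a * (n : ℤ) - (m : ℤ) * b) = 1 := by
    rw [zpow_sub₀ hq, h1, h2, div_self]
    exact zpow_ne_zero _ ht
  have hkey : a * (n : ℤ) = (m : ℤ) * b :=
    sub_eq_zero.mp (zpow_eq_one_imp q hq hqru _ h3)
  -- now integer arithmetic
  have hdpos : 0 < d := hd ▸ Nat.gcd_pos_of_pos_left n hm
  set m' : ℕ := m / d with hm'
  set n' : ℕ := n / d with hn'
  have hmd : m = d * m' := (Nat.mul_div_cancel' (hd ▸ Nat.gcd_dvd_left m n)).symm
  have hnd : n = d * n' := (Nat.mul_div_cancel' (hd ▸ Nat.gcd_dvd_right m n)).symm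
  have hcop : Nat.Coprime m' n' := by
    rw [hm', hn', hd]
    exact Nat.coprime_div_gcd_div_gcd (hd ▸ hdpos)
  have hkey' : a * (n' : ℤ) = (m' : ℤ) * b := by
    have : a * ((d : ℤ) * n') = (d : ℤ) * m' * b := by
      rw [← Nat.cast_mul, ← Nat.cast_mul, ← hnd, ← hmd]; exact hkey
    have hd0 : (d : ℤ) ≠ 0 := by exact_mod_cast hdpos.ne'
    apply mul_left_cancel₀ hd0
    linarith [this]
  have hcopz : IsCoprime (m' : ℤ) (n' : ℤ) := Int.isCoprime_iff_gcd_eq_one.mpr hcop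
  have hdvd : (m' : ℤ) ∣ a := by
    have : (m' : ℤ) ∣ a * n' := ⟨b, hkey'⟩
    exact hcopz.dvd_of_dvd_mul_right this
  obtain ⟨j, hj⟩ := hdvd
  refine ⟨j, by rw [hj, mul_comm], ?_⟩
  have hm'0 : (m' : ℤ) ≠ 0 := by
    have : 0 < m' := Nat.div_pos (Nat.le_of_dvd hm (hd ▸ Nat.gcd_dvd_left m n)) hdpos
    exact_mod_cast this.ne'
  apply mul_left_cancel₀ hm'0
  rw [← hkey', hj]; ring
end

section
/- Let N ≥ 1 and 0 ≤ k < N be integers, and let u, v ∈ ℕ^N with u[j] = 0 for all j > k. Suppose w is a permutation of {1,…,N} such that for every i ∈ {1,…,N}: if w(i) ≤ i then v[i] ≤ u[w(i)], and if w(i) > i then v[i] < u[w(i)]. Then w(j) = j and v[j] = 0 for every j > k. (Consequently, by Knop's extra-vanishing theorem, if the shifted nonsymmetric Macdonald polynomial M_v does not vanish at the spectral point ⟨u⟩ of a vector u supported in the first k coordinates, then v is also supported in the first k coordinates.) -/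
/-- Let `N ≥ 1` and `0 ≤ k < N`, and let `u, v ∈ ℕ^N` with `u[j] = 0` for
all `j > k`. Suppose `w` is a permutation of `{1,…,N}` such that for every `i`:
if `w(i) ≤ i` then `v[i] ≤ u[w(i)]`, and if `w(i) > i` then `v[i] < u[w(i)]`.
Then `w(j) = j` and `v[j] = 0` for every `j > k`. -/
theorem knop_extra_vanishing_support
    (N k : ℕ) (hN : 1 ≤ N) (hk : k < N)
    (u v : Fin N → ℕ) (hu : ∀ j : Fin N, k ≤ (j : ℕ) → u j = 0)
    (w : Equiv.Perm (Fin N))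
    (hw : ∀ i : Fin N, (w i ≤ i → v i ≤ u (w i)) ∧ (i < w i → v i < u (w i))) :
    ∀ j : Fin N, k ≤ (j : ℕ) → w j = j ∧ v j = 0 := by
  have key : ∀ n : ℕ, ∀ j : Fin N, N - 1 - (j : ℕ) = n → k ≤ (j : ℕ) → w j = j := by
    intro n
    induction n using Nat.strong_induction_on with
    | _ n ih =>
      intro j hn hkj
      set i := w⁻¹ j with hi
      have hwi : w i = j := by simp [hi]
      rcases lt_trichotomy (i : ℕ) (j : ℕ) with h | h | h
      · exfalso
        have hlt : i < w i := by rw [hwi]; exact h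
        have hv := (hw i).2 hlt
        rw [hwi, hu j hkj] at hv
        exact Nat.not_lt_zero _ hv
      · have hij : i = j := Fin.ext h
        rw [hij] at hwi; exact hwi
      · exfalso
        have hki : k ≤ (i : ℕ) := le_trans hkj (le_of_lt h)
        have hiN : (i : ℕ) < N := i.isLt
        have hlt : N - 1 - (i : ℕ) < n := by omega
        have hfix := ih _ hlt i rfl hki
        rw [hwi] at hfix
        have : (j : ℕ) = (i : ℕ) := congrArg Fin.val hfix
        omega
  intro j hkj
  have hwj : w j = j := key _ j rfl hkj
  refine ⟨hwj, ?_⟩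
  have hv := (hw j).1 (le_of_eq hwj)
  rw [hwj, hu j hkj] at hv
  exact Nat.le_zero.mp hv
end
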